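/- The four states |ψ₊₊⟩, Z|ψ₊₊⟩, X|ψ₊₊⟩, Y|ψ₊₊⟩ (with |ψ₊₊⟩ = (√(3+√3)|0⟩ + e^{iπ/4}√(3-√3)|1⟩)/√6) form a qubit 2-design: the average of |ψ⟩⟨ψ|⊗|ψ⟩⟨ψ| over these four states equals the average of |ψ⟩⟨ψ|⊗|ψ⟩⟨ψ| over Haar-random unit vectors in ℂ², namely (1/6)(I + SWAP) on ℂ²⊗ℂ², where SWAP is the swap operator. -/

import Mathlib

noncomputable section
open Complex Matrix

/-- Pauli X matrix. -/
def σX : Matrix (Fin 2) (Fin 2) ℂ := !![0, 1; 1, 0]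
/-- Pauli Y matrix. -/
def σY : Matrix (Fin 2) (Fin 2) ℂ := !![0, -I; I, 0]
/-- Pauli Z matrix. -/
def σZ : Matrix (Fin 2) (Fin 2) ℂ := !![1, 0; 0, -1]

/-- The state |ψ₊₊⟩ = (√(3+√3)|0⟩ + e^{iπ/4}√(3-√3)|1⟩)/√6. -/
def ψpp : Fin 2 → ℂ :=
  ![(Real.sqrt (3 + Real.sqrt 3) : ℂ) / (Real.sqrt 6 : ℂ),
    Complex.exp (Real.pi * I / 4) * (Real.sqrt (3 - Real.sqrt 3) : ℂ) / (Real.sqrt 6 : ℂ)]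

/-- Expectation value ⟨ψ|M|ψ⟩. -/
def expVal (M : Matrix (Fin 2) (Fin 2) ℂ) (ψ : Fin 2 → ℂ) : ℂ :=
  ∑ i, ∑ j, (starRingEnd ℂ) (ψ i) * M i j * ψ j

open Kronecker

/-- The four tetrahedron states |ψ₊₊⟩, Z|ψ₊₊⟩, X|ψ₊₊⟩, Y|ψ₊₊⟩. -/
def tetraStates : Fin 4 → (Fin 2 → ℂ) :=
  ![ψpp, σZ.mulVec ψpp, σX.mulVec ψpp, σY.mulVec ψpp]

/-- Rank-one projector |ψ⟩⟨ψ|. -/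
def proj (ψ : Fin 2 → ℂ) : Matrix (Fin 2) (Fin 2) ℂ :=
  fun i j => ψ i * (starRingEnd ℂ) (ψ j)

/-- The swap operator on ℂ² ⊗ ℂ². -/
def SWAP : Matrix (Fin 2 × Fin 2) (Fin 2 × Fin 2) ℂ :=
  fun p q => if p.1 = q.2 ∧ p.2 = q.1 then 1 else 0

def sc : ℂ := (Real.sqrt 3 : ℂ) / 3

lemma he : Complex.exp (Real.pi * I / 4) = ((Real.sqrt 2 / 2 : ℝ) : ℂ) * (1 + I) := by
  have : (Real.pi * I / 4 : ℂ) = ((Real.pi/4 : ℝ) : ℂ) * I := by push_cast; ring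
  rw [this, Complex.exp_mul_I, ← Complex.ofReal_cos, ← Complex.ofReal_sin,
    Real.cos_pi_div_four, Real.sin_pi_div_four]
  push_cast; ring

lemma h3c : ((Real.sqrt 3):ℂ)^2 = 3 := by
  norm_cast; rw [Real.sq_sqrt]; norm_num
lemma h6c : ((Real.sqrt 6):ℂ)^2 = 6 := by
  norm_cast; rw [Real.sq_sqrt]; norm_num
lemma h2c : ((Real.sqrt 2):ℂ)^2 = 2 := by
  norm_cast; rw [Real.sq_sqrt]; norm_num
lemma hac : ((Real.sqrt (3+Real.sqrt 3)):ℂ)^2 = 3 + (Real.sqrt 3:ℂ) := by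
  norm_cast; rw [Real.sq_sqrt]; positivity
lemma hbc : ((Real.sqrt (3-Real.sqrt 3)):ℂ)^2 = 3 - (Real.sqrt 3:ℂ) := by
  norm_cast; rw [Real.sq_sqrt]
  nlinarith [Real.sq_sqrt (by norm_num : (0:ℝ) ≤ 3), Real.sqrt_nonneg 3]
lemma habc : ((Real.sqrt (3+Real.sqrt 3)):ℂ) * ((Real.sqrt (3-Real.sqrt 3)):ℂ) = ((Real.sqrt 6):ℂ) := by
  norm_cast
  rw [← Real.sqrt_mul (by positivity)]
  congr 1
  nlinarith [Real.sq_sqrt (by norm_num : (0:ℝ) ≤ 3)]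
lemma h26c : ((Real.sqrt 2):ℂ) * ((Real.sqrt 6):ℂ) = 2 * ((Real.sqrt 3):ℂ) := by
  norm_cast
  rw [← Real.sqrt_mul (by positivity)]
  rw [show (2*6:ℝ) = 12 by norm_num, show (12:ℝ) = 2^2*3 by norm_num, Real.sqrt_mul (by positivity), Real.sqrt_sq (by norm_num)]
lemma h6ne : ((Real.sqrt 6):ℂ) ≠ 0 := by norm_cast; positivity

lemma L00 : ψpp 0 * (starRingEnd ℂ) (ψpp 0) = (1 + sc)/2 := by
  simp only [ψpp, sc, Matrix.cons_val_zero, map_div₀, Complex.conj_ofReal]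
  field_simp
  linear_combination 6*hac - ((Real.sqrt 3:ℂ)+3)*h6c

lemma L11 : ψpp 1 * (starRingEnd ℂ) (ψpp 1) = (1 - sc)/2 := by
  simp only [ψpp, sc, Matrix.cons_val_one, Matrix.cons_val_zero, Matrix.head_cons, he, map_div₀, _root_.map_mul,
    Complex.conj_ofReal, map_add, _root_.map_one, Complex.conj_I]
  push_cast
  field_simp
  ring_nf
  linear_combination (-3*((Real.sqrt 2:ℂ))^2*((Real.sqrt (3-Real.sqrt 3)):ℂ)^2)*Complex.I_sq + (6*((Real.sqrt (3-Real.sqrt 3)):ℂ)^2)*h2c + 12*hbc + (2*(Real.sqrt 3:ℂ) - 6)*h6c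

lemma L01 : ψpp 0 * (starRingEnd ℂ) (ψpp 1) = sc*(1-I)/2 := by
  simp only [ψpp, sc, Matrix.cons_val_zero, Matrix.cons_val_one, Matrix.head_cons, he,
    map_div₀, _root_.map_mul, Complex.conj_ofReal, map_add, _root_.map_one, Complex.conj_I]
  push_cast
  field_simp
  ring_nf
  linear_combination (1-I)*(3*((Real.sqrt 2):ℂ)*habc + 3*h26c - ((Real.sqrt 3):ℂ)*h6c)

lemma L10 : ψpp 1 * (starRingEnd ℂ) (ψpp 0) = sc*(1+I)/2 := by
  simp only [ψpp, sc, Matrix.cons_val_zero, Matrix.cons_val_one, Matrix.head_cons, he,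
    map_div₀, _root_.map_mul, Complex.conj_ofReal, map_add, _root_.map_one, Complex.conj_I]
  push_cast
  field_simp
  ring_nf
  linear_combination (1+I)*(3*((Real.sqrt 2):ℂ)*habc + 3*h26c - ((Real.sqrt 3):ℂ)*h6c)

lemma hsc : sc^2 = 1/3 := by
  simp only [sc, div_pow, h3c]; norm_num


lemma proj0 : proj (tetraStates 0) = !![(1+sc)/2, sc*(1-I)/2; sc*(1+I)/2, (1-sc)/2] := by
  ext i j
  fin_cases i <;> fin_cases j <;>
    simp [tetraStates, proj] <;>
    first
      | linear_combination L00
      | linear_combination L11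
      | linear_combination L01
      | linear_combination L10

set_option maxHeartbeats 1000000 in
lemma proj1 : proj (tetraStates 1) = !![(1+sc)/2, -(sc*(1-I))/2; -(sc*(1+I))/2, (1-sc)/2] := by
  ext i j
  fin_cases i <;> fin_cases j <;>
    simp [tetraStates, proj, σZ, Matrix.mulVec, dotProduct, Matrix.vecHead, Matrix.vecTail, Fin.sum_univ_two] <;>
    first
      | linear_combination L00
      | linear_combination L11
      | linear_combination -L01
      | linear_combination -L10

set_option maxHeartbeats 1000000 in
lemma proj2 : proj (tetraStates 2) = !![(1-sc)/2, sc*(1+I)/2; sc*(1-I)/2, (1+sc)/2] := by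
  ext i j
  fin_cases i <;> fin_cases j <;>
    simp [tetraStates, proj, σX, Matrix.mulVec, dotProduct, Matrix.vecHead, Matrix.vecTail, Fin.sum_univ_two] <;>
    first
      | linear_combination L00
      | linear_combination L11
      | linear_combination L01
      | linear_combination L10

set_option maxHeartbeats 1000000 in
lemma proj3 : proj (tetraStates 3) = !![(1-sc)/2, -(sc*(1+I))/2; -(sc*(1-I))/2, (1+sc)/2] := by
  ext i j
  fin_cases i <;> fin_cases j <;>
    simp [tetraStates, proj, σY, Matrix.mulVec, dotProduct, Matrix.vecHead, Matrix.vecTail, Fin.sum_univ_two] <;>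
    (try first
      | linear_combination L00
      | linear_combination L11
      | linear_combination -L01
      | linear_combination -L10
      | linear_combination L11 - (ψpp 1 * (starRingEnd ℂ) (ψpp 1)) * Complex.I_sq
      | linear_combination L00 - (ψpp 0 * (starRingEnd ℂ) (ψpp 0)) * Complex.I_sq
      | linear_combination -L01 + (ψpp 0 * (starRingEnd ℂ) (ψpp 1)) * Complex.I_sq
      | linear_combination -L10 + (ψpp 1 * (starRingEnd ℂ) (ψpp 0)) * Complex.I_sq)

theorem stmt_4 :
    (1 / 4 : ℂ) • (∑ i : Fin 4, (proj (tetraStates i)) ⊗ₖ (proj (tetraStates i)))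
      = (1 / 6 : ℂ) • ((1 : Matrix (Fin 2 × Fin 2) (Fin 2 × Fin 2) ℂ) + SWAP) := by
  rw [Fin.sum_univ_four, proj0, proj1, proj2, proj3]
  ext ⟨i, k⟩ ⟨j, l⟩
  fin_cases i <;> fin_cases k <;> fin_cases j <;> fin_cases l <;>
    simp [SWAP, Matrix.one_apply, Matrix.kroneckerMap_apply, Prod.ext_iff] <;>
    ring_nf <;>
    simp [hsc, Complex.I_sq] <;>
    norm_num
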